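/- For any pmf p on a finite set X and any empirical type q of sequences of length n (i.e., n·q(i) is an integer for all i), the probability under the iid p measure that a length-n sequence has empirical type exactly q is at most 2^{-n D(q||p)}. -/
import Mathlib


open scoped Classical

/-- the iid `p` probability that a length-`n` sequence has empirical type
exactly `q` (a type of denominator `n`) is at most `2^{-n D(q ‖ p)}`. -/
theorem type_class_prob_le
    {X : Type} [Fintype X] [DecidableEq X] [Nonempty X]
    (p q : X → ℝ) (n : ℕ) (hn : 0 < n)
    (hp0 : ∀ i, 0 ≤ p i) (hp1 : ∑ i, p i = 1)
    (hq0 : ∀ i, 0 ≤ q i) (hq1 : ∑ i, q i = 1)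
    (hsupp : ∀ i, 0 < q i → 0 < p i)
    (htype : ∀ i, ∃ k : ℕ, (k : ℝ) = n * q i) :
    ∑ x : Fin n → X,
        (if ∀ i, ((Finset.univ.filter (fun t => x t = i)).card : ℝ) = n * q i
          then ∏ t, p (x t) else 0)
      ≤ 2 ^ (-(n : ℝ) * ∑ i, q i * Real.logb 2 (q i / p i)) := by
  choose c hc using htype
  -- if q i = 0 then c i = 0
  have hc0 : ∀ i, q i = 0 → c i = 0 := by
    intro i h
    have : (c i : ℝ) = 0 := by rw [hc i, h, mul_zero]
    exact_mod_cast this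
  set S : Finset (Fin n → X) := Finset.univ.filter
    (fun x => ∀ i, ((Finset.univ.filter (fun t => x t = i)).card : ℝ) = n * q i) with hS
  -- the key product identity on S
  have prod_eq : ∀ (f : X → ℝ), ∀ x ∈ S, ∏ t, f (x t) = ∏ i, f i ^ (c i) := by
    intro f x hx
    have h2 := (Finset.mem_filter.mp hx).2
    rw [← Finset.prod_fiberwise' Finset.univ x f]
    refine Finset.prod_congr rfl fun i _ => ?_
    rw [Finset.prod_const]
    congr 1
    have : ((Finset.univ.filter (fun t => x t = i)).card : ℝ) = (c i : ℝ) := by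
      rw [h2 i, hc i]
    exact_mod_cast this
  have hsum_eq : ∀ (f : X → ℝ),
      ∑ x ∈ S, ∏ t, f (x t) = (S.card : ℝ) * ∏ i, f i ^ (c i) := by
    intro f
    rw [Finset.sum_congr rfl (prod_eq f), Finset.sum_const, nsmul_eq_mul]
  -- the iid q probability of S is at most 1
  have hq_le : (S.card : ℝ) * ∏ i, q i ^ (c i) ≤ 1 := by
    rw [← hsum_eq q]
    have h2 : ∑ x ∈ S, ∏ t, q (x t) ≤ ∑ x : Fin n → X, ∏ t, q (x t) :=
      Finset.sum_le_sum_of_subset_of_nonneg (Finset.filter_subset _ _)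
        (fun x _ _ => Finset.prod_nonneg fun t _ => hq0 _)
    have h3 : ∑ x : Fin n → X, ∏ t, q (x t) = 1 := by
      have := Finset.sum_pow' (Finset.univ : Finset X) q n
      rw [hq1, one_pow, Fintype.piFinset_univ] at this
      exact this.symm
    linarith
  -- the RHS equals ∏ i, (p i / q i) ^ c i
  have hRHS : (2 : ℝ) ^ (-(n : ℝ) * ∑ i, q i * Real.logb 2 (q i / p i))
      = ∏ i, (p i / q i) ^ (c i) := by
    rw [Finset.mul_sum, Real.rpow_sum_of_pos (by norm_num : (0:ℝ) < 2) _ _]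
    refine Finset.prod_congr rfl fun i _ => ?_
    rcases eq_or_lt_of_le (hq0 i) with h0 | hqi
    · rw [← h0, hc0 i h0.symm]; simp
    · have hpi := hsupp i hqi
      have hqp : 0 < q i / p i := div_pos hqi hpi
      have : -(n : ℝ) * (q i * Real.logb 2 (q i / p i))
          = Real.logb 2 (q i / p i) * (-(c i : ℝ)) := by
        rw [hc i]; ring
      rw [this, Real.rpow_mul (by norm_num : (0:ℝ) ≤ 2),
        Real.rpow_logb (by norm_num) (by norm_num) hqp,
        Real.rpow_neg hqp.le, Real.rpow_natCast, ← inv_pow, inv_div]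
  -- compare p-product with q-product
  have hfac : ∏ i, p i ^ (c i) = (∏ i, q i ^ (c i)) * ∏ i, (p i / q i) ^ (c i) := by
    rw [← Finset.prod_mul_distrib]
    refine Finset.prod_congr rfl fun i _ => ?_
    rcases eq_or_lt_of_le (hq0 i) with h0 | hqi
    · rw [hc0 i h0.symm]; simp
    · rw [← mul_pow, mul_div_cancel₀ _ (ne_of_gt hqi)]
  have hratio_nonneg : 0 ≤ ∏ i, (p i / q i) ^ (c i) :=
    Finset.prod_nonneg fun i _ => pow_nonneg (div_nonneg (hp0 i) (hq0 i)) _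
  calc ∑ x : Fin n → X,
        (if ∀ i, ((Finset.univ.filter (fun t => x t = i)).card : ℝ) = n * q i
          then ∏ t, p (x t) else 0)
      = ∑ x ∈ S, ∏ t, p (x t) := (Finset.sum_filter _ _).symm
    _ = (S.card : ℝ) * ∏ i, p i ^ (c i) := hsum_eq p
    _ = ((S.card : ℝ) * ∏ i, q i ^ (c i)) * ∏ i, (p i / q i) ^ (c i) := by
        rw [hfac]; ring
    _ ≤ 1 * ∏ i, (p i / q i) ^ (c i) :=
        mul_le_mul_of_nonneg_right hq_le hratio_nonneg
    _ = 2 ^ (-(n : ℝ) * ∑ i, q i * Real.logb 2 (q i / p i)) := by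
        rw [one_mul, hRHS]
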